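/- Let (𝒟, π) be a representation of a unital *-algebra A on a Hilbert C*-module E over a C*-algebra D. For a₁, …, aₙ ∈ A set b := Σ_{j=1}^n aⱼ* aⱼ. Then for every i ∈ {1,…,n} and every ξ ∈ 𝒟 one has 0 ≤ ⟪ξ,ξ⟫ + ⟪π(aᵢ)ξ, π(aᵢ)ξ⟫ ≤ (5/4)·(⟪ξ,ξ⟫ + ⟪π(b)ξ, π(b)ξ⟫) in the partial order of D. In particular, the graph norms ‖ξ‖_a := ‖⟪ξ,ξ⟫ + ⟪π(a)ξ, π(a)ξ⟫‖^{1/2} satisfy ‖ξ‖_{aᵢ} ≤ (5/4)·‖ξ‖_b for all ξ ∈ 𝒟, so the set of graph norms, ordered by domination up to a positive constant, is directed. -/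

import Mathlib

open scoped RightActions

/-- The Hilbert C⋆-module class as it stood in Mathlib of December 2024 (right `Aᵐᵒᵖ`-action,
inner product `A`-linear on the right in the second argument). -/
class CStarModuleOld (A : outParam <| Type*) (E : Type*) [NonUnitalSemiring A] [StarRing A]
    [Module ℂ A] [AddCommGroup E] [Module ℂ E] [PartialOrder A] [SMul Aᵐᵒᵖ E] [Norm A] [Norm E]
    extends Inner A E where
  inner_add_right {x} {y} {z} : inner x (y + z) = inner x y + inner x z
  inner_self_nonneg {x} : 0 ≤ inner x x
  inner_self {x} : inner x x = 0 ↔ x = 0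
  inner_op_smul_right {a : A} {x y : E} : inner x (y <• a) = inner x y * a
  inner_smul_right_complex {z : ℂ} {x} {y} : inner x (z • y) = z • inner x y
  star_inner x y : star (inner x y) = inner y x
  norm_eq_sqrt_norm_inner_self x : ‖x‖ = √‖inner x x‖

variable (A : Type*) [Ring A] [Algebra ℂ A] [StarRing A] [StarModule ℂ A]
variable (D : Type*) [NonUnitalNormedRing D] [StarRing D] [CStarRing D] [PartialOrder D]
  [StarOrderedRing D] [NormedSpace ℂ D] [IsScalarTower ℂ D D] [SMulCommClass ℂ D D]
  [StarModule ℂ D] [CompleteSpace D]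
variable (E : Type*) [NormedAddCommGroup E] [NormedSpace ℂ E] [SMul Dᵐᵒᵖ E] [CStarModuleOld D E]
  [CompleteSpace E]

/-- A representation of a unital `⋆`-algebra `A` on a Hilbert C*-module `E` over a C*-algebra
`D`: a dense `D`-submodule `dom ⊆ E` together with a unital algebra homomorphism `π` from `A`
into the `D`-module endomorphisms of `dom` satisfying `⟪π a ξ, η⟫ = ⟪ξ, π (star a) η⟫` for the
`D`-valued inner product. -/
structure ModuleRep where
  dom : Submodule ℂ E
  smul_mem' : ∀ (d : D) {x : E}, x ∈ dom → x <• d ∈ dom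
  dense : Dense (dom : Set E)
  π : A → (dom →ₗ[ℂ] dom)
  π_one : π 1 = LinearMap.id
  π_mul : ∀ a b : A, π (a * b) = (π a).comp (π b)
  π_add : ∀ a b : A, π (a + b) = π a + π b
  π_smul : ∀ (c : ℂ) (a : A), π (c • a) = c • π a
  π_smulD : ∀ (a : A) (d : D) (x : dom),
    ((π a ⟨(x : E) <• d, smul_mem' d x.2⟩ : dom) : E) = ((π a x : dom) : E) <• d
  π_star : ∀ (a : A) (ξ η : dom),
    (inner D ((π a ξ : dom) : E) ((η : dom) : E) : D) = inner D ((ξ : dom) : E) ((π (star a) η : dom) : E)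

variable {A D E}

/-- The square of the graph norm of `ξ` for the element `a`, namely
`⟪ξ, ξ⟫ + ⟪π a ξ, π a ξ⟫ ∈ D`. -/
noncomputable def graphSq (ρ : ModuleRep A D E) (a : A) (ξ : ρ.dom) : D :=
  (inner D ((ξ : ρ.dom) : E) ((ξ : ρ.dom) : E) : D) +
    inner D ((ρ.π a ξ : ρ.dom) : E) ((ρ.π a ξ : ρ.dom) : E)

/-- The graph norm `‖ξ‖_a = ‖⟪ξ, ξ⟫ + ⟪π a ξ, π a ξ⟫‖^(1/2)`. -/
noncomputable def graphNorm (ρ : ModuleRep A D E) (a : A) (ξ : ρ.dom) : ℝ :=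
  Real.sqrt ‖graphSq ρ a ξ‖

namespace CStarModuleOld

/-- The inner product as an additive map in the second argument. -/
def innerAddHom (x : E) : E →+ D where
  toFun := fun y => inner D x y
  map_zero' := by
    have h : inner D x (0 : E) = inner D x 0 + inner D x 0 := by
      rw [← CStarModuleOld.inner_add_right, add_zero]
    simpa using h
  map_add' := fun _ _ => CStarModuleOld.inner_add_right

lemma inner_sub_right (x y z : E) : inner D x (y - z) = inner D x y - inner D x z :=
  map_sub (innerAddHom x) y z

lemma inner_sum_right {ι : Type*} (s : Finset ι) (x : E) (f : ι → E) :
    inner D x (∑ i ∈ s, f i) = ∑ i ∈ s, inner D x (f i) :=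
  map_sum (innerAddHom x) f s

lemma inner_sub_left (x y z : E) : inner D (x - y) z = inner D x z - inner D y z := by
  rw [← CStarModuleOld.star_inner z (x - y), inner_sub_right, star_sub,
    CStarModuleOld.star_inner, CStarModuleOld.star_inner]

lemma inner_smul_right_real (r : ℝ) (x y : E) : inner D x (r • y) = r • inner D x y := by
  show inner D x ((r : ℂ) • y) = (r : ℂ) • inner D x y
  exact CStarModuleOld.inner_smul_right_complex

lemma inner_smul_left_real (r : ℝ) (x y : E) : inner D (r • x) y = r • inner D x y := by
  rw [← CStarModuleOld.star_inner y (r • x), inner_smul_right_real]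
  show star ((r : ℂ) • inner D y x) = (r : ℂ) • inner D x y
  rw [star_smul, CStarModuleOld.star_inner, Complex.star_def, Complex.conj_ofReal]

end CStarModuleOld

open CStarModuleOld in
theorem graph_norms_directed (ρ : ModuleRep A D E) {n : ℕ} (a : Fin n → A) (i : Fin n)
    (ξ : ρ.dom) :
    0 ≤ graphSq ρ (a i) ξ ∧
    graphSq ρ (a i) ξ ≤ ((5 : ℝ) / 4) • graphSq ρ (∑ j, star (a j) * a j) ξ ∧
    graphNorm ρ (a i) ξ ≤ (5 / 4) * graphNorm ρ (∑ j, star (a j) * a j) ξ := by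
  set b : A := ∑ j, star (a j) * a j with hb
  set ξE : E := (ξ : E) with hξE
  set ηE : E := ((ρ.π b ξ : ρ.dom) : E) with hηE
  set x : D := (inner D ξE ξE : D) with hx
  set z : D := (inner D ηE ηE : D) with hz
  set w : D := (inner D ξE ηE : D) with hw
  have key : ∀ c : A, (inner D ((ρ.π c ξ : ρ.dom) : E) ((ρ.π c ξ : ρ.dom) : E) : D)
      = inner D (ξ : E) ((ρ.π (star c * c) ξ : ρ.dom) : E) := by
    intro c
    rw [ρ.π_star c ξ (ρ.π c ξ), ρ.π_mul]
    rfl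
  have hπ0 : ρ.π 0 = 0 := by
    have h := ρ.π_smul 0 0
    simpa using h
  have hπb : ρ.π b = ∑ j, ρ.π (star (a j) * a j) :=
    map_sum (⟨⟨ρ.π, hπ0⟩, ρ.π_add⟩ : A →+ (ρ.dom →ₗ[ℂ] ρ.dom)) _ _
  have hbstar : star b = b := by
    simp [hb, star_sum, star_mul]
  have hw_sum : w = ∑ j, (inner D (ξ : E) ((ρ.π (star (a j) * a j) ξ : ρ.dom) : E) : D) := by
    rw [hw, hηE, hπb, LinearMap.sum_apply, Submodule.coe_sum, inner_sum_right]
  have hterm : ∀ j, (0 : D) ≤ inner D (ξ : E) ((ρ.π (star (a j) * a j) ξ : ρ.dom) : E) := by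
    intro j
    rw [← key]
    exact inner_self_nonneg
  have h2 : (inner D (ξ : E) ((ρ.π (star (a i) * a i) ξ : ρ.dom) : E) : D) ≤ w := by
    rw [hw_sum]
    exact Finset.single_le_sum (fun j _ => hterm j) (Finset.mem_univ i)
  have hyw : (inner D ((ρ.π (a i) ξ : ρ.dom) : E) ((ρ.π (a i) ξ : ρ.dom) : E) : D) ≤ w := by
    rw [key (a i)]
    exact h2
  have hw_sa : (inner D ηE ξE : D) = w := by
    rw [hηE, hξE, ρ.π_star b ξ ξ, hbstar]
  have expand : (inner D ((1/2 : ℝ) • ξE - ηE) ((1/2 : ℝ) • ξE - ηE) : D)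
      = ((1/4 : ℝ) • x + z) - w := by
    simp only [CStarModuleOld.inner_sub_left, CStarModuleOld.inner_sub_right,
      CStarModuleOld.inner_smul_left_real, CStarModuleOld.inner_smul_right_real]
    rw [← hx, ← hz, ← hw, hw_sa]
    module
  have h4 : w ≤ (1/4 : ℝ) • x + z := by
    have hpos : (0 : D) ≤ inner D ((1/2 : ℝ) • ξE - ηE) ((1/2 : ℝ) • ξE - ηE) :=
      inner_self_nonneg
    rw [expand] at hpos
    exact sub_nonneg.mp hpos
  have hz4 : (0 : D) ≤ (1/4 : ℝ) • z := by
    have : ((1/4 : ℝ) • z : D) = inner D ((1/2 : ℝ) • ηE) ((1/2 : ℝ) • ηE) := by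
      rw [inner_smul_left_real, inner_smul_right_real, ← hz, smul_smul]
      norm_num
    rw [this]
    exact inner_self_nonneg
  have hsq_b : graphSq ρ b ξ = x + z := rfl
  have hsq_i : graphSq ρ (a i) ξ
      = x + inner D ((ρ.π (a i) ξ : ρ.dom) : E) ((ρ.π (a i) ξ : ρ.dom) : E) := rfl
  have h0 : (0 : D) ≤ graphSq ρ (a i) ξ :=
    add_nonneg inner_self_nonneg inner_self_nonneg
  have hle : graphSq ρ (a i) ξ ≤ ((5 : ℝ) / 4) • graphSq ρ b ξ := by
    have step1 : graphSq ρ (a i) ξ ≤ x + ((1/4 : ℝ) • x + z) := by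
      rw [hsq_i]
      exact add_le_add_right (le_trans hyw h4) x
    have step2 : x + ((1/4 : ℝ) • x + z) ≤ ((5 : ℝ) / 4) • graphSq ρ b ξ := by
      have hdiff : ((5 : ℝ) / 4) • graphSq ρ b ξ - (x + ((1/4 : ℝ) • x + z))
          = (1/4 : ℝ) • z := by
        rw [hsq_b]
        module
      have := add_le_add_right hz4 (x + ((1/4 : ℝ) • x + z))
      rw [add_zero] at this
      calc x + ((1/4 : ℝ) • x + z) ≤ x + ((1/4 : ℝ) • x + z) + (1/4 : ℝ) • z := this
        _ = ((5 : ℝ) / 4) • graphSq ρ b ξ := by rw [← hdiff]; abel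
    exact le_trans step1 step2
  refine ⟨h0, hle, ?_⟩
  letI : NonUnitalCStarAlgebra D :=
    { ‹NonUnitalNormedRing D›, ‹StarRing D›, ‹CStarRing D›, ‹CompleteSpace D›,
      ‹NormedSpace ℂ D›, ‹IsScalarTower ℂ D D›, ‹SMulCommClass ℂ D D›, ‹StarModule ℂ D›,
      (inferInstance : Module ℂ D) with }
  have hn : ‖graphSq ρ (a i) ξ‖ ≤ (5 / 4) * ‖graphSq ρ b ξ‖ := by
    calc ‖graphSq ρ (a i) ξ‖ ≤ ‖((5 : ℝ) / 4) • graphSq ρ b ξ‖ :=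
          CStarAlgebra.norm_le_norm_of_nonneg_of_le h0 hle
      _ = (5 / 4) * ‖graphSq ρ b ξ‖ := by
          rw [norm_smul, Real.norm_eq_abs]
          norm_num
  unfold graphNorm
  calc Real.sqrt ‖graphSq ρ (a i) ξ‖ ≤ Real.sqrt ((5 / 4) * ‖graphSq ρ b ξ‖) :=
        Real.sqrt_le_sqrt hn
    _ ≤ Real.sqrt ((5 / 4) ^ 2 * ‖graphSq ρ b ξ‖) := by
        apply Real.sqrt_le_sqrt
        nlinarith [norm_nonneg (graphSq ρ b ξ)]
    _ = (5 / 4) * Real.sqrt ‖graphSq ρ b ξ‖ := by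
        rw [Real.sqrt_mul (by positivity), Real.sqrt_sq (by norm_num)]
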